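/- Fix α and r with 0 < α < 1 < r. Then the function p ↦ Θ_p{α, r} is monotone increasing on (-∞, -1]: for all p₁ ≤ p₂ ≤ -1, one has Θ_{p₁}{α, r} ≤ Θ_{p₂}{α, r}. -/

import Mathlib

open Real Filter

/-- `F_p(s, α, r) = ((1 - s^{2p})/(1 - r^{2p}))(r² + α²)
  + ((s^{2p} - r^{2p})/(1 - r^{2p}))(1 + α² r²) - s² - α² r² s⁻²`. -/
noncomputable def Fp (p α r s : ℝ) : ℝ :=
  (1 - s ^ (2 * p)) / (1 - r ^ (2 * p)) * (r ^ 2 + α ^ 2) +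
  (s ^ (2 * p) - r ^ (2 * p)) / (1 - r ^ (2 * p)) * (1 + α ^ 2 * r ^ 2) -
  s ^ 2 - α ^ 2 * r ^ 2 * s ^ (-2 : ℝ)

/-- The period function `Θ_p{α, r} = ∫_1^r ds / √(F_p(s, α, r))`. -/
noncomputable def Theta (p α r : ℝ) : ℝ :=
  ∫ s in (1 : ℝ)..r, (Real.sqrt (Fp p α r s))⁻¹

/-- Secant slopes of the concave function `R ↦ R^θ` at `1` are antitone. -/
lemma psi_anti {θ R₁ R₂ : ℝ} (hθ0 : 0 < θ) (hθ1 : θ < 1) (hR0 : 0 < R₁)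
    (hle : R₁ ≤ R₂) (hR1 : R₂ < 1) :
    (1 - R₂ ^ θ) / (1 - R₂) ≤ (1 - R₁ ^ θ) / (1 - R₁) := by
  have hconv : ConvexOn ℝ (Set.Ici 0) (fun x : ℝ => -(x ^ θ)) :=
    (Real.concaveOn_rpow hθ0.le hθ1.le).neg
  have h := hconv.secant_mono (a := 1) (x := R₁) (y := R₂)
    (by norm_num) hR0.le (hR0.trans_le hle).le
    (ne_of_lt (lt_of_le_of_lt hle hR1)) (ne_of_lt hR1) hle
  simp only [Real.one_rpow] at h
  have e₁ : (-(R₁ ^ θ) - -1) / (R₁ - 1) = -((1 - R₁ ^ θ) / (1 - R₁)) := by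
    rw [show R₁ - 1 = -(1 - R₁) by ring, div_neg]; ring_nf
  have e₂ : (-(R₂ ^ θ) - -1) / (R₂ - 1) = -((1 - R₂ ^ θ) / (1 - R₂)) := by
    rw [show R₂ - 1 = -(1 - R₂) by ring, div_neg]; ring_nf
  rw [e₁, e₂] at h
  linarith

/-- The coefficient `x(p) = (1 - s^{2p})/(1 - r^{2p})` is antitone in `p` for `p < 0`. -/
lemma x_mono {r s p₁ p₂ : ℝ} (hr : 1 < r) (hs1 : 1 < s) (hsr : s < r)
    (h12 : p₁ ≤ p₂) (hp2 : p₂ < 0) :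
    (1 - s ^ (2 * p₂)) / (1 - r ^ (2 * p₂)) ≤ (1 - s ^ (2 * p₁)) / (1 - r ^ (2 * p₁)) := by
  have hr0 : (0 : ℝ) < r := by linarith
  have hs0 : (0 : ℝ) < s := by linarith
  have hlogr : 0 < Real.log r := Real.log_pos hr
  have hlogs : 0 < Real.log s := Real.log_pos hs1
  set θ := Real.log s / Real.log r with hθ
  have hθ0 : 0 < θ := div_pos hlogs hlogr
  have hθ1 : θ < 1 := (div_lt_one hlogr).2 (Real.log_lt_log hs0 hsr)
  have key : ∀ p : ℝ, s ^ (2 * p) = (r ^ (2 * p)) ^ θ := by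
    intro p
    rw [← Real.rpow_mul hr0.le, Real.rpow_def_of_pos hr0, Real.rpow_def_of_pos hs0]
    congr 1
    rw [hθ]
    field_simp
  have hp1 : p₁ < 0 := lt_of_le_of_lt h12 hp2
  rw [key p₁, key p₂]
  exact psi_anti hθ0 hθ1 (Real.rpow_pos_of_pos hr0 _)
    ((Real.rpow_le_rpow_left_iff hr).2 (by linarith))
    (Real.rpow_lt_one_of_one_lt_of_neg hr (by linarith))

lemma Fp_eq (p α r s : ℝ) (h : 1 - r ^ (2 * p) ≠ 0) :
    Fp p α r s = (1 + α ^ 2 * r ^ 2) +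
      ((1 - s ^ (2 * p)) / (1 - r ^ (2 * p))) * ((r ^ 2 - 1) * (1 - α ^ 2)) -
      s ^ 2 - α ^ 2 * r ^ 2 * s ^ (-2 : ℝ) := by
  unfold Fp
  field_simp
  ring

lemma one_sub_rpow_ne {r : ℝ} (hr : 1 < r) {p : ℝ} (hp : p < 0) :
    1 - r ^ (2 * p) ≠ 0 := by
  have := Real.rpow_lt_one_of_one_lt_of_neg hr (by linarith : 2 * p < 0)
  intro h
  linarith

lemma Fp_mono {α r : ℝ} (hα0 : 0 < α) (hα1 : α < 1) (hr : 1 < r) {p₁ p₂ : ℝ}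
    (h12 : p₁ ≤ p₂) (hp2 : p₂ < 0) {s : ℝ} (hs1 : 1 < s) (hsr : s < r) :
    Fp p₂ α r s ≤ Fp p₁ α r s := by
  have hp1 : p₁ < 0 := lt_of_le_of_lt h12 hp2
  rw [Fp_eq _ _ _ _ (one_sub_rpow_ne hr hp1), Fp_eq _ _ _ _ (one_sub_rpow_ne hr hp2)]
  have hx := x_mono hr hs1 hsr h12 hp2
  have hc : (0 : ℝ) ≤ (r ^ 2 - 1) * (1 - α ^ 2) := by
    have h1 : (0:ℝ) < r ^ 2 - 1 := by nlinarith
    have h2 : (0:ℝ) < 1 - α ^ 2 := by nlinarith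
    positivity
  nlinarith [mul_le_mul_of_nonneg_right hx hc]

lemma Fp_neg_one {α r : ℝ} (hr : 1 < r) {s : ℝ} (hs : 0 < s) :
    Fp (-1) α r s = (s ^ 2 - 1) * (r ^ 2 - s ^ 2) / s ^ 2 := by
  have hr0 : (0 : ℝ) < r := by linarith
  have hs2 : s ^ ((2 : ℝ) * (-1)) = (s ^ 2)⁻¹ := by
    rw [show (2 : ℝ) * (-1) = -((2 : ℕ) : ℝ) by norm_num, Real.rpow_neg hs.le,
      Real.rpow_natCast]
  have hr2 : r ^ ((2 : ℝ) * (-1)) = (r ^ 2)⁻¹ := by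
    rw [show (2 : ℝ) * (-1) = -((2 : ℕ) : ℝ) by norm_num, Real.rpow_neg hr0.le,
      Real.rpow_natCast]
  have hsm2 : s ^ (-2 : ℝ) = (s ^ 2)⁻¹ := by
    rw [show (-2 : ℝ) = -((2 : ℕ) : ℝ) by norm_num, Real.rpow_neg hs.le, Real.rpow_natCast]
  have hr2one : (1 : ℝ) - (r ^ 2)⁻¹ ≠ 0 := by
    have h1 : (1 : ℝ) < r ^ 2 := by nlinarith
    have : (r ^ 2)⁻¹ < 1 := by
      rw [inv_lt_one_iff₀]
      right; exact h1
    intro h; linarith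
  unfold Fp
  rw [hs2, hr2, hsm2]
  have hsne : s ^ 2 ≠ 0 := by positivity
  have hrne : r ^ 2 ≠ 0 := by positivity
  have hr1ne : r ^ 2 - 1 ≠ 0 := by nlinarith
  field_simp
  ring

theorem stmt_14 (α r : ℝ) (hα₀ : 0 < α) (hα₁ : α < 1) (hr : 1 < r)
    (p₁ p₂ : ℝ) (h₁₂ : p₁ ≤ p₂) (h₂ : p₂ ≤ -1) :
    Theta p₁ α r ≤ Theta p₂ α r := by
  have hrpos : (0 : ℝ) < r := by linarith
  -- positivity of the base function on the open interval
  have hFpos : ∀ s ∈ Set.Ioo (1 : ℝ) r, 0 < Fp (-1) α r s := by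
    intro s hs
    obtain ⟨hs1, hsr⟩ := hs
    have hs0 : (0 : ℝ) < s := by linarith
    rw [Fp_neg_one hr hs0]
    have h1 : (0 : ℝ) < s ^ 2 - 1 := by nlinarith
    have h2 : (0 : ℝ) < r ^ 2 - s ^ 2 := by nlinarith
    positivity
  -- derivative realization of the base integrand
  set G : ℝ → ℝ := fun x => Real.arcsin ((2 * x ^ 2 - (r ^ 2 + 1)) / (r ^ 2 - 1)) / 2 with hGdef
  have hG : ∀ s ∈ Set.Ioo (1 : ℝ) r, HasDerivAt G ((Real.sqrt (Fp (-1) α r s))⁻¹) s := by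
    intro s hs
    obtain ⟨hs1, hsr⟩ := hs
    have hs0 : (0 : ℝ) < s := by linarith
    have hr2 : (0 : ℝ) < r ^ 2 - 1 := by nlinarith
    have hX : (0 : ℝ) < (s ^ 2 - 1) * (r ^ 2 - s ^ 2) :=
      mul_pos (by nlinarith) (by nlinarith)
    set u : ℝ := (2 * s ^ 2 - (r ^ 2 + 1)) / (r ^ 2 - 1) with hu
    have hu1 : u < 1 := by rw [hu, div_lt_one hr2]; nlinarith
    have hum : -1 < u := by rw [hu, lt_div_iff₀ hr2]; nlinarith
    have hinner : HasDerivAt (fun x : ℝ => (2 * x ^ 2 - (r ^ 2 + 1)) / (r ^ 2 - 1))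
        (4 * s / (r ^ 2 - 1)) s := by
      have h := (((hasDerivAt_pow 2 s).const_mul (2 : ℝ)).sub_const (r ^ 2 + 1)).div_const
        (r ^ 2 - 1)
      refine h.congr_deriv ?_
      push_cast
      ring
    have harc := (Real.hasDerivAt_arcsin hum.ne' hu1.ne).comp s hinner
    have hfin := harc.div_const 2
    have hFval : Real.sqrt (Fp (-1) α r s)
        = Real.sqrt ((s ^ 2 - 1) * (r ^ 2 - s ^ 2)) / s := by
      rw [Fp_neg_one hr hs0, Real.sqrt_div hX.le, Real.sqrt_sq hs0.le]
    have h1u : 1 - u ^ 2 = 4 * ((s ^ 2 - 1) * (r ^ 2 - s ^ 2)) / (r ^ 2 - 1) ^ 2 := by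
      rw [hu]
      field_simp
      ring
    have hsq : Real.sqrt (1 - u ^ 2)
        = 2 * Real.sqrt ((s ^ 2 - 1) * (r ^ 2 - s ^ 2)) / (r ^ 2 - 1) := by
      have e : (2 * Real.sqrt ((s ^ 2 - 1) * (r ^ 2 - s ^ 2)) / (r ^ 2 - 1)) ^ 2
          = 4 * ((s ^ 2 - 1) * (r ^ 2 - s ^ 2)) / (r ^ 2 - 1) ^ 2 := by
        rw [div_pow, mul_pow, Real.sq_sqrt hX.le]
        ring
      rw [h1u, ← e, Real.sqrt_sq (by positivity)]
    have hSpos : 0 < Real.sqrt ((s ^ 2 - 1) * (r ^ 2 - s ^ 2)) := Real.sqrt_pos.2 hX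
    refine hfin.congr_deriv ?_
    rw [hFval, hsq]
    field_simp
    ring
  -- integrability of the base integrand
  have hbase : IntervalIntegrable (fun s => (Real.sqrt (Fp (-1) α r s))⁻¹) MeasureTheory.volume
      1 r := by
    apply intervalIntegral.intervalIntegrable_deriv_of_nonneg (g := G)
    · apply Continuous.continuousOn
      exact (Real.continuous_arcsin.comp (by continuity)).div_const 2
    · intro x hx
      rw [min_eq_left hr.le, max_eq_right hr.le] at hx
      exact hG x hx
    · intro x hx
      exact inv_nonneg.2 (Real.sqrt_nonneg _)
  have hgi : MeasureTheory.IntegrableOn (fun s => (Real.sqrt (Fp (-1) α r s))⁻¹)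
      (Set.Ioo (1 : ℝ) r) MeasureTheory.volume :=
    ((intervalIntegrable_iff_integrableOn_Ioc_of_le hr.le).1 hbase).mono_set
      Set.Ioo_subset_Ioc_self
  -- measurability
  have hmeas : ∀ p : ℝ, Measurable fun s : ℝ => (Real.sqrt (Fp p α r s))⁻¹ := by
    intro p
    apply Measurable.inv
    apply Real.continuous_sqrt.measurable.comp
    unfold Fp
    fun_prop
  -- sqrt-inverse comparison
  have key : ∀ {a b : ℝ}, 0 < a → a ≤ b → (Real.sqrt b)⁻¹ ≤ (Real.sqrt a)⁻¹ := by
    intro a b ha hab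
    have h1 : 0 < Real.sqrt a := Real.sqrt_pos.2 ha
    have h2 : Real.sqrt a ≤ Real.sqrt b := Real.sqrt_le_sqrt hab
    gcongr
  -- integrability for any p ≤ -1
  have hint : ∀ p : ℝ, p ≤ -1 →
      IntervalIntegrable (fun s => (Real.sqrt (Fp p α r s))⁻¹) MeasureTheory.volume 1 r := by
    intro p hp
    rw [intervalIntegrable_iff_integrableOn_Ioc_of_le hr.le,
      integrableOn_Ioc_iff_integrableOn_Ioo]
    apply MeasureTheory.Integrable.mono' hgi ((hmeas p).aestronglyMeasurable)
    rw [MeasureTheory.ae_restrict_iff' measurableSet_Ioo]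
    refine MeasureTheory.ae_of_all _ fun s hs => ?_
    have hF1 : 0 < Fp (-1) α r s := hFpos s hs
    have hle : Fp (-1) α r s ≤ Fp p α r s :=
      Fp_mono hα₀ hα₁ hr hp (by norm_num) hs.1 hs.2
    rw [Real.norm_of_nonneg (inv_nonneg.2 (Real.sqrt_nonneg _))]
    exact key hF1 hle
  -- measure-zero boundary
  have hnull : MeasureTheory.volume (Set.Icc (1 : ℝ) r \ Set.Ioo 1 r) = 0 := by
    rw [Set.Icc_diff_Ioo_same hr.le]
    exact (Set.toFinite _).measure_zero _
  have h1 : ∀ᵐ s ∂(MeasureTheory.volume.restrict (Set.Icc (1 : ℝ) r)),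
      s ∈ Set.Icc (1 : ℝ) r := MeasureTheory.ae_restrict_mem measurableSet_Icc
  have h2 : ∀ᵐ s ∂(MeasureTheory.volume.restrict (Set.Icc (1 : ℝ) r)),
      s ∉ Set.Icc (1 : ℝ) r \ Set.Ioo 1 r := by
    rw [← MeasureTheory.measure_eq_zero_iff_ae_notMem]
    exact le_antisymm ((MeasureTheory.Measure.restrict_apply_le _ _).trans hnull.le) zero_le
  unfold Theta
  apply intervalIntegral.integral_mono_ae_restrict hr.le (hint p₁ (h₁₂.trans h₂)) (hint p₂ h₂)
  filter_upwards [h1, h2] with s hs hns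
  have hIoo : s ∈ Set.Ioo (1 : ℝ) r := by
    by_contra h
    exact hns ⟨hs, h⟩
  have hF2pos : 0 < Fp p₂ α r s :=
    lt_of_lt_of_le (hFpos s hIoo)
      (Fp_mono hα₀ hα₁ hr h₂ (by norm_num) hIoo.1 hIoo.2)
  have hle : Fp p₂ α r s ≤ Fp p₁ α r s :=
    Fp_mono hα₀ hα₁ hr h₁₂ (by linarith) hIoo.1 hIoo.2
  exact key hF2pos hle
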